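/- arXiv:1607.05737 — 3 statements merged into one kernel-verified Lean document; each statement's English description precedes it below -/
import Mathlib

section
/- Let X be a real Hilbert space, F : X → X monotone (⟨F(x) - F(x̃), x - x̃⟩ ≥ 0 for all x, x̃), α > 0, δ ≥ 0, y, y^δ ∈ X with ‖y - y^δ‖ ≤ δ, x̄ ∈ X, and let x† satisfy F(x†) = y. Suppose x_α^δ ∈ X satisfies F(x_α^δ) + α(x_α^δ - x̄) = y^δ. Then ‖x_α^δ - x†‖² ≤ ⟨x† - x̄, x† - x_α^δ⟩ + (δ/α)‖x_α^δ - x†‖. -/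
open scoped RealInnerProductSpace

theorem stmt_6 {X : Type*} [NormedAddCommGroup X] [InnerProductSpace ℝ X] [CompleteSpace X]
    (F : X → X) (hmon : ∀ x x' : X, 0 ≤ ⟪F x - F x', x - x'⟫)
    (α δ : ℝ) (hα : 0 < α) (hδ : 0 ≤ δ)
    (y yδ xbar xdag xad : X) (hnoise : ‖y - yδ‖ ≤ δ)
    (hsol : F xdag = y) (hreg : F xad + α • (xad - xbar) = yδ) :
    ‖xad - xdag‖ ^ 2 ≤ ⟪xdag - xbar, xdag - xad⟫ + (δ / α) * ‖xad - xdag‖ := by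
  have hF : F xad = yδ - α • (xad - xbar) := eq_sub_of_add_eq hreg
  have h1 : 0 ≤ ⟪yδ - y, xad - xdag⟫ - α * ⟪xad - xbar, xad - xdag⟫ := by
    have h := hmon xad xdag
    rw [hF, hsol] at h
    have : (yδ - α • (xad - xbar) - y) = (yδ - y) - α • (xad - xbar) := by abel
    rw [this, inner_sub_left, inner_smul_left] at h
    simpa using h
  have hnoise' : ‖yδ - y‖ ≤ δ := by rwa [norm_sub_rev] at hnoise
  have h2 : ⟪yδ - y, xad - xdag⟫ ≤ δ * ‖xad - xdag‖ :=
    le_trans (real_inner_le_norm _ _)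
      (mul_le_mul_of_nonneg_right hnoise' (norm_nonneg _))
  have hdec : ⟪xad - xbar, xad - xdag⟫ = ‖xad - xdag‖ ^ 2 - ⟪xdag - xbar, xdag - xad⟫ := by
    have : (xad - xbar) = (xad - xdag) + (xdag - xbar) := by abel
    rw [this, inner_add_left, real_inner_self_eq_norm_sq, ← neg_sub xdag xad, inner_neg_right]
    ring
  have key : α * ‖xad - xdag‖ ^ 2 ≤ α * ⟪xdag - xbar, xdag - xad⟫ + δ * ‖xad - xdag‖ := by
    nlinarith [h1, h2]
  have hd : (δ / α) * ‖xad - xdag‖ * α = δ * ‖xad - xdag‖ := by field_simp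
  nlinarith [key, hd, hα]
end

section
/- Consider X = L²(0,1) and the Cesàro operator C defined by (Cx)(s) = (1/s)∫₀^s x(t) dt. Let u ∈ L²(0,1) be the Heaviside-type function u(t) = 0 for t < 1/2 and u(t) = 1 for t ≥ 1/2. Then there exists a constant K > 0 such that for all sufficiently large R > 0 there exists w ∈ L²(0,1) with ‖w‖ ≤ R and ‖u - Cw‖ ≤ K/R. -/
set_option maxHeartbeats 1000000


open MeasureTheory ENNReal

theorem stmt_15 :
    ∃ K > (0 : ℝ), ∃ R₀ > (0 : ℝ), ∀ R ≥ R₀,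
      ∃ w : ℝ → ℝ,
        MemLp w 2 (volume.restrict (Set.Ioc (0 : ℝ) 1)) ∧
        eLpNorm w 2 (volume.restrict (Set.Ioc (0 : ℝ) 1)) ≤ ENNReal.ofReal R ∧
        eLpNorm
          (fun s : ℝ =>
            (if s < 1 / 2 then (0 : ℝ) else 1) - s⁻¹ * ∫ t in Set.Ioc (0 : ℝ) s, w t)
          2 (volume.restrict (Set.Ioc (0 : ℝ) 1)) ≤ ENNReal.ofReal (K / R) := by
  refine ⟨2, by norm_num, 4, by norm_num, fun R hR => ?_⟩
  have hR1 : (1:ℝ) ≤ R := by linarith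
  have hRpos : (0:ℝ) < R := by linarith
  have hR2 : (1:ℝ) ≤ R^2 := by nlinarith
  have hR2pos : (0:ℝ) < R^2 := by positivity
  obtain ⟨δ, hδdef⟩ : ∃ δ : ℝ, δ = 1/(2*R^2) := ⟨_, rfl⟩
  have hδpos : 0 < δ := by rw [hδdef]; positivity
  have hδle : δ ≤ 1/2 := by
    rw [hδdef, div_le_div_iff₀ (by positivity) (by norm_num)]
    nlinarith
  have hb1 : 1/2 + δ ≤ 1 := by linarith
  obtain ⟨b, hbdef⟩ : ∃ b : ℝ, b = 1/2 + δ := ⟨_, rfl⟩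
  obtain ⟨μ, hμdef⟩ : ∃ μ' : Measure ℝ, μ' = volume.restrict (Set.Ioc (0:ℝ) 1) := ⟨_, rfl⟩
  rw [← hμdef]
  have hμuniv : μ Set.univ = 1 := by
    rw [hμdef, Measure.restrict_apply_univ, Real.volume_Ioc]
    norm_num
  haveI : IsFiniteMeasure μ := ⟨by rw [hμuniv]; exact ENNReal.one_lt_top⟩
  have hμne : μ ≠ 0 := by
    intro h
    rw [h] at hμuniv
    simp at hμuniv
  obtain ⟨w, hwdef⟩ : ∃ w : ℝ → ℝ, w = fun t =>
    (Set.Ico (1/2:ℝ) b).indicator (fun _ => R^2) t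
      + (Set.Ici b).indicator (fun _ => (1:ℝ)) t := ⟨_, rfl⟩
  -- key integral formula
  have key : ∀ s : ℝ, ∫ t in Set.Ioc (0:ℝ) s, w t
      = (volume (Set.Ioc 0 s ∩ Set.Ico (1/2) b)).toReal * R^2
        + (volume (Set.Ioc 0 s ∩ Set.Ici b)).toReal * 1 := by
    intro s
    haveI : IsFiniteMeasure (volume.restrict (Set.Ioc (0:ℝ) s)) :=
      ⟨by rw [Measure.restrict_apply_univ]; exact measure_Ioc_lt_top⟩
    rw [hwdef]
    rw [integral_add ((integrable_const _).indicator measurableSet_Ico)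
        ((integrable_const _).indicator measurableSet_Ici),
      setIntegral_indicator measurableSet_Ico, setIntegral_indicator measurableSet_Ici,
      setIntegral_const, setIntegral_const, smul_eq_mul, smul_eq_mul]
    rfl
  -- pointwise bound on the error
  have hbound : ∀ s ∈ Set.Ioc (0:ℝ) 1,
      |(if s < 1/2 then (0:ℝ) else 1) - s⁻¹ * ∫ t in Set.Ioc (0:ℝ) s, w t|
        ≤ (Set.Ico (1/2:ℝ) b).indicator (fun _ => (1:ℝ)) s + 1/R^2 := by
    intro s hs
    obtain ⟨hs0, hs1⟩ := hs
    rcases lt_or_ge s (1/2) with h1 | h1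
    · have e1 : Set.Ioc (0:ℝ) s ∩ Set.Ico (1/2) b = ∅ := by
        ext t
        simp only [Set.mem_inter_iff, Set.mem_Ioc, Set.mem_Ico, Set.mem_empty_iff_false,
          iff_false, not_and, and_imp]
        intro ht0 hts h12
        linarith
      have e2 : Set.Ioc (0:ℝ) s ∩ Set.Ici b = ∅ := by
        ext t
        simp only [Set.mem_inter_iff, Set.mem_Ioc, Set.mem_Ici, Set.mem_empty_iff_false,
          iff_false, not_and, and_imp]
        intro ht0 hts
        linarith
      have h2 : ∫ t in Set.Ioc (0:ℝ) s, w t = 0 := by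
        rw [key, e1, e2]; simp
      rw [if_pos h1, h2]
      have hind : (0:ℝ) ≤ (Set.Ico (1/2:ℝ) b).indicator (fun _ => (1:ℝ)) s :=
        Set.indicator_nonneg (fun _ _ => zero_le_one) s
      have : |(0:ℝ) - s⁻¹ * 0| = 0 := by simp
      rw [this]
      positivity
    · rcases lt_or_ge s b with h2 | h2
      · have e1 : Set.Ioc (0:ℝ) s ∩ Set.Ico (1/2) b = Set.Icc (1/2) s := by
          ext t
          simp only [Set.mem_inter_iff, Set.mem_Ioc, Set.mem_Ico, Set.mem_Icc]
          constructor
          · rintro ⟨⟨ht0, hts⟩, ht12, htb⟩; exact ⟨ht12, hts⟩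
          · rintro ⟨ht12, hts⟩; exact ⟨⟨by linarith, hts⟩, ht12, by linarith⟩
        have e2 : Set.Ioc (0:ℝ) s ∩ Set.Ici b = ∅ := by
          ext t
          simp only [Set.mem_inter_iff, Set.mem_Ioc, Set.mem_Ici, Set.mem_empty_iff_false,
            iff_false, not_and, and_imp]
          intro ht0 hts
          linarith
        have h3 : ∫ t in Set.Ioc (0:ℝ) s, w t = (s - 1/2) * R^2 := by
          rw [key, e1, e2, Real.volume_Icc, ENNReal.toReal_ofReal (by linarith)]
          simp
        rw [if_neg (not_lt.2 h1), h3,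
          Set.indicator_of_mem (Set.mem_Ico.2 ⟨h1, h2⟩)]
        have h4 : 0 ≤ s⁻¹ * ((s - 1/2) * R^2) := by
          have : (0:ℝ) ≤ s - 1/2 := by linarith
          positivity
        have hRδ : R^2 * δ = 1/2 := by
          rw [hδdef]; field_simp
        have h5 : s⁻¹ * ((s - 1/2) * R^2) ≤ 1 := by
          rw [inv_mul_le_iff₀ hs0]
          nlinarith [hRδ, mul_le_mul_of_nonneg_right (show s - 1/2 ≤ δ by linarith) hR2pos.le]
        have hr : (0:ℝ) ≤ 1/R^2 := by positivity
        rw [abs_le]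
        constructor <;> linarith
      · have e1 : Set.Ioc (0:ℝ) s ∩ Set.Ico (1/2) b = Set.Ico (1/2) b := by
          ext t
          simp only [Set.mem_inter_iff, Set.mem_Ioc, Set.mem_Ico]
          constructor
          · rintro ⟨_, h⟩; exact h
          · rintro ⟨ht12, htb⟩; exact ⟨⟨by linarith, by linarith⟩, ht12, htb⟩
        have e2 : Set.Ioc (0:ℝ) s ∩ Set.Ici b = Set.Icc b s := by
          ext t
          simp only [Set.mem_inter_iff, Set.mem_Ioc, Set.mem_Ici, Set.mem_Icc]
          constructor
          · rintro ⟨⟨ht0, hts⟩, htb⟩; exact ⟨htb, hts⟩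
          · rintro ⟨htb, hts⟩; exact ⟨⟨by linarith, hts⟩, htb⟩
        have hRδ : R^2 * δ = 1/2 := by
          rw [hδdef]; field_simp
        have h3 : ∫ t in Set.Ioc (0:ℝ) s, w t = s - δ := by
          rw [key, e1, e2, Real.volume_Ico, Real.volume_Icc,
            ENNReal.toReal_ofReal (by rw [hbdef]; linarith),
            ENNReal.toReal_ofReal (by linarith)]
          rw [hbdef]
          ring_nf
          nlinarith [hRδ]
        rw [if_neg (not_lt.2 h1), h3,
          Set.indicator_of_notMem (by simp only [Set.mem_Ico, not_and, not_lt]; intro _; exact h2)]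
        have heq : 1 - s⁻¹ * (s - δ) = δ / s := by
          field_simp
          ring
        rw [heq, zero_add]
        have hδs : 0 < δ / s := by positivity
        rw [abs_of_pos hδs, div_le_iff₀ hs0]
        have : (1/R^2) * s ≥ (1/R^2) * (1/2) := by
          apply mul_le_mul_of_nonneg_left (by linarith) (by positivity)
        have h2δ : (1/R^2) * (1/2) = δ := by rw [hδdef]; ring
        linarith
  -- measurability helpers
  have hmes1 : AEStronglyMeasurable
      ((Set.Ico (1/2:ℝ) b).indicator (fun _ => R^2)) μ :=
    (measurable_const.indicator measurableSet_Ico).aestronglyMeasurable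
  have hmes2 : AEStronglyMeasurable ((Set.Ici (b:ℝ)).indicator (fun _ => (1:ℝ))) μ :=
    (measurable_const.indicator measurableSet_Ici).aestronglyMeasurable
  have hmes3 : AEStronglyMeasurable
      ((Set.Ico (1/2:ℝ) b).indicator (fun _ => (1:ℝ))) μ :=
    (measurable_const.indicator measurableSet_Ico).aestronglyMeasurable
  -- measure of the Ico set under μ
  have hμIco : μ (Set.Ico (1/2:ℝ) b) = ENNReal.ofReal δ := by
    rw [hμdef, Measure.restrict_apply measurableSet_Ico,
      Set.inter_eq_left.2 (fun t ht => Set.mem_Ioc.2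
        ⟨by linarith [(Set.mem_Ico.1 ht).1], by linarith [(Set.mem_Ico.1 ht).2]⟩),
      Real.volume_Ico, hbdef]
    norm_num
  have htwo : ((2:ENNReal)).toReal = 2 := by norm_num
  -- eLpNorm of the Ico indicator with constant c ≥ 0
  have hsqrt : ∀ c : ℝ, 0 ≤ c →
      eLpNorm ((Set.Ico (1/2:ℝ) b).indicator (fun _ => c)) 2 μ
        = ENNReal.ofReal (c * Real.sqrt δ) := by
    intro c hc
    rw [eLpNorm_indicator_const measurableSet_Ico (by norm_num) (by norm_num), hμIco,
      htwo, Real.enorm_eq_ofReal hc, ENNReal.ofReal_rpow_of_pos hδpos,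
      ← Real.sqrt_eq_rpow, ← ENNReal.ofReal_mul hc]
  refine ⟨w, ?_, ?_, ?_⟩
  · rw [hwdef]
    exact MemLp.add (ε := ℝ) (memLp_indicator_const 2 measurableSet_Ico (R^2) (Or.inr (measure_ne_top μ _)))
      (memLp_indicator_const 2 measurableSet_Ici (1:ℝ) (Or.inr (measure_ne_top μ _)))
  · -- norm of w
    calc eLpNorm w 2 μ
        ≤ eLpNorm ((Set.Ico (1/2:ℝ) b).indicator (fun _ => R^2)) 2 μ
          + eLpNorm ((Set.Ici (b:ℝ)).indicator (fun _ => (1:ℝ))) 2 μ := by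
          rw [hwdef]; exact eLpNorm_add_le hmes1 hmes2 one_le_two
      _ ≤ ENNReal.ofReal (3/4 * R) + ENNReal.ofReal 1 := by
          gcongr
          · rw [hsqrt _ hR2pos.le]
            apply ENNReal.ofReal_le_ofReal
            have hs1 : Real.sqrt δ ≤ 3/(4*R) := by
              have hle : δ ≤ (3/(4*R))^2 := by
                rw [hδdef, div_pow, div_le_div_iff₀ (by positivity) (by positivity)]
                nlinarith
              calc Real.sqrt δ ≤ Real.sqrt ((3/(4*R))^2) := Real.sqrt_le_sqrt hle
                _ = 3/(4*R) := Real.sqrt_sq (by positivity)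
            calc R^2 * Real.sqrt δ ≤ R^2 * (3/(4*R)) := by
                  apply mul_le_mul_of_nonneg_left hs1 hR2pos.le
              _ = 3/4 * R := by field_simp
          · rw [eLpNorm_indicator_const measurableSet_Ici (by norm_num) (by norm_num), htwo]
            have h1 : μ (Set.Ici (b:ℝ)) ≤ 1 := hμuniv ▸ measure_mono (Set.subset_univ _)
            have h2 : ‖(1:ℝ)‖ₑ = 1 := by simp
            rw [h2, one_mul, ENNReal.ofReal_one]
            calc μ (Set.Ici (b:ℝ)) ^ (1/(2:ℝ)) ≤ 1 ^ (1/(2:ℝ)) :=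
                  ENNReal.rpow_le_rpow h1 (by norm_num)
              _ = 1 := ENNReal.one_rpow _
      _ = ENNReal.ofReal (3/4 * R + 1) := by
          rw [← ENNReal.ofReal_add (by positivity) zero_le_one]
      _ ≤ ENNReal.ofReal R := ENNReal.ofReal_le_ofReal (by linarith)
  · -- norm of the error
    calc eLpNorm (fun s : ℝ =>
          (if s < 1 / 2 then (0 : ℝ) else 1) - s⁻¹ * ∫ t in Set.Ioc (0 : ℝ) s, w t) 2 μ
        ≤ eLpNorm ((Set.Ico (1/2:ℝ) b).indicator (fun _ => (1:ℝ))
            + fun _ : ℝ => 1/R^2) 2 μ := by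
          apply eLpNorm_mono_ae
          rw [hμdef]
          refine (ae_restrict_mem measurableSet_Ioc).mono (fun s hs => ?_)
          have h := hbound s hs
          have hind : (0:ℝ) ≤ (Set.Ico (1/2:ℝ) b).indicator (fun _ => (1:ℝ)) s :=
            Set.indicator_nonneg (fun _ _ => zero_le_one) s
          rw [Real.norm_eq_abs, Real.norm_eq_abs, Pi.add_apply]
          exact h.trans (le_abs_self _)
      _ ≤ eLpNorm ((Set.Ico (1/2:ℝ) b).indicator (fun _ => (1:ℝ))) 2 μ
          + eLpNorm (fun _ : ℝ => 1/R^2) 2 μ :=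
          eLpNorm_add_le hmes3 aestronglyMeasurable_const one_le_two
      _ ≤ ENNReal.ofReal (1/R) + ENNReal.ofReal (1/R) := by
          gcongr
          · rw [hsqrt 1 zero_le_one, one_mul]
            apply ENNReal.ofReal_le_ofReal
            have hle : δ ≤ (1/R)^2 := by
              rw [hδdef, div_pow, div_le_div_iff₀ (by positivity) (by positivity)]
              nlinarith
            calc Real.sqrt δ ≤ Real.sqrt ((1/R)^2) := Real.sqrt_le_sqrt hle
              _ = 1/R := Real.sqrt_sq (by positivity)
          · rw [eLpNorm_const _ (by norm_num) hμne, hμuniv, htwo]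
            have : ‖(1/R^2 : ℝ)‖ₑ = ENNReal.ofReal (1/R^2) :=
              Real.enorm_eq_ofReal (by positivity)
            rw [this]
            simp only [ENNReal.one_rpow, mul_one]
            apply ENNReal.ofReal_le_ofReal
            rw [div_le_div_iff₀ (by positivity) hRpos]
            nlinarith
      _ = ENNReal.ofReal (2/R) := by
          rw [← ENNReal.ofReal_add (by positivity) (by positivity)]
          ring_nf
end

section
/- Let X be a real Hilbert space, F : X → X monotone, and suppose a conditional stability estimate ‖x - x†‖ ≤ φ(‖F(x) - F(x†)‖) holds for all x in the closed ball B_r(x†), where φ is a concave index function. Assume α(δ) = cδ with c > 0, r > ‖x† - x̄‖ + 1/c, and x^δ solves F(x^δ) + α(δ)(x^δ - x̄) = y^δ with ‖F(x†) - y^δ‖ ≤ δ. Then x^δ ∈ B_r(x†) and ‖x^δ - x†‖ ≤ 2·max(1, c‖x† - x̄‖)·φ(δ). -/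
open scoped RealInnerProductSpace

lemma superhom_aux (φ : ℝ → ℝ) (hφ0 : φ 0 = 0)
    (hφconc : ConcaveOn ℝ (Set.Ici 0) φ) (lam s : ℝ) (hlam : 1 ≤ lam) (hs : 0 ≤ s) :
    φ (lam * s) ≤ lam * φ s := by
  have hlam0 : 0 < lam := lt_of_lt_of_le one_pos hlam
  have h1 : (1/lam) • (lam * s) + (1 - 1/lam) • (0:ℝ) = s := by
    simp only [smul_eq_mul, mul_zero, add_zero]; field_simp
  have h2 := hφconc.2 (show lam * s ∈ Set.Ici 0 by
      exact Set.mem_Ici.mpr (mul_nonneg (le_of_lt hlam0) hs))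
    (Set.self_mem_Ici)
    (show (0:ℝ) ≤ 1/lam by positivity)
    (show (0:ℝ) ≤ 1 - 1/lam by
      have : 1/lam ≤ 1 := by rw [div_le_one hlam0]; exact hlam
      linarith)
    (by field_simp; ring)
  rw [h1] at h2
  simp only [smul_eq_mul, hφ0, mul_zero, add_zero] at h2
  calc φ (lam * s) = lam * ((1/lam) * φ (lam * s)) := by field_simp
    _ ≤ lam * φ s := by
        apply mul_le_mul_of_nonneg_left h2 (le_of_lt hlam0)

theorem stmt_18 {X : Type*} [NormedAddCommGroup X] [InnerProductSpace ℝ X] [CompleteSpace X]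
    (F : X → X) (hmon : ∀ x x' : X, 0 ≤ ⟪F x - F x', x - x'⟫)
    (xdag xbar : X) (r : ℝ)
    (φ : ℝ → ℝ) (hφcont : ContinuousOn φ (Set.Ici 0))
    (hφmono : StrictMonoOn φ (Set.Ici 0)) (hφ0 : φ 0 = 0)
    (hφconc : ConcaveOn ℝ (Set.Ici 0) φ)
    (hstab : ∀ x : X, ‖x - xdag‖ ≤ r → ‖x - xdag‖ ≤ φ (‖F x - F xdag‖))
    (c δ : ℝ) (hc : 0 < c) (hδ : 0 < δ)
    (hr : ‖xdag - xbar‖ + 1 / c < r)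
    (yδ xδ : X) (hnoise : ‖F xdag - yδ‖ ≤ δ)
    (hreg : F xδ + (c * δ) • (xδ - xbar) = yδ) :
    ‖xδ - xdag‖ ≤ r ∧ ‖xδ - xdag‖ ≤ 2 * max 1 (c * ‖xdag - xbar‖) * φ δ := by
  set α : ℝ := c * δ with hα_def
  have hα : 0 < α := mul_pos hc hδ
  set M : ℝ := ‖xdag - xbar‖ with hM_def
  have hM : 0 ≤ M := norm_nonneg _
  set t : ℝ := ‖xδ - xdag‖ with ht_def
  have ht0 : 0 ≤ t := norm_nonneg _
  have hFxδ : F xδ = yδ - α • (xδ - xbar) := by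
    rw [← hreg]; abel
  -- key inner product inequality
  have hmon' := hmon xδ xdag
  have hdiff : F xδ - F xdag = (yδ - F xdag) - α • (xδ - xbar) := by
    rw [hFxδ]; abel
  have h1 : α * ⟪xδ - xbar, xδ - xdag⟫ ≤ ⟪yδ - F xdag, xδ - xdag⟫ := by
    rw [hdiff, inner_sub_left, real_inner_smul_left] at hmon'
    linarith
  have h2 : ⟪yδ - F xdag, xδ - xdag⟫ ≤ δ * t := by
    calc ⟪yδ - F xdag, xδ - xdag⟫ ≤ ‖yδ - F xdag‖ * ‖xδ - xdag‖ := real_inner_le_norm _ _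
      _ ≤ δ * t := by
          apply mul_le_mul_of_nonneg_right _ ht0
          rw [norm_sub_rev]; exact hnoise
  have h3 : t^2 - M * t ≤ ⟪xδ - xbar, xδ - xdag⟫ := by
    have hsplit : xδ - xbar = (xδ - xdag) + (xdag - xbar) := by abel
    rw [hsplit, inner_add_left, real_inner_self_eq_norm_sq]
    have : -(M * t) ≤ ⟪xdag - xbar, xδ - xdag⟫ := by
      have := abs_real_inner_le_norm (xdag - xbar) (xδ - xdag)
      have := neg_abs_le ⟪xdag - xbar, xδ - xdag⟫
      nlinarith [abs_nonneg ⟪xdag - xbar, xδ - xdag⟫]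
    nlinarith
  -- first estimate: t ≤ M + 1/c
  have hbasic : t ≤ M + 1 / c := by
    have key : α * (t^2 - M * t) ≤ δ * t := by
      calc α * (t^2 - M * t) ≤ α * ⟪xδ - xbar, xδ - xdag⟫ :=
            mul_le_mul_of_nonneg_left h3 (le_of_lt hα)
        _ ≤ δ * t := le_trans h1 h2
    by_contra hcon
    push_neg at hcon
    have hc1 : 0 < 1 / c := by positivity
    have htpos : 0 < t := by linarith
    have hct : c * t > c * M + 1 := by
      have := mul_lt_mul_of_pos_left hcon hc
      rw [mul_add, mul_one_div, div_self (ne_of_gt hc)] at this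
      linarith
    have key' : c * δ * (t^2 - M*t) ≤ δ * t := by rw [← hα_def]; exact key
    nlinarith [mul_pos hδ (mul_pos htpos (show 0 < c*t - (c*M+1) by linarith))]
  have h_in_ball : t ≤ r := le_trans hbasic (le_of_lt hr)
  refine ⟨h_in_ball, ?_⟩
  -- second estimate: ‖F xδ - F xdag‖ ≤ α * M + δ
  have hFbound : ‖F xδ - F xdag‖ ≤ α * M + δ := by
    have heq : (F xδ - F xdag) + α • (xδ - xdag) = (yδ - F xdag) - α • (xdag - xbar) := by
      rw [hdiff]; module
    have hsq : ‖F xδ - F xdag‖^2 ≤ ‖(F xδ - F xdag) + α • (xδ - xdag)‖^2 := by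
      rw [norm_add_sq_real, real_inner_smul_right, norm_smul, Real.norm_eq_abs,
        abs_of_pos hα]
      nlinarith [hmon xδ xdag, sq_nonneg (α * ‖xδ - xdag‖)]
    have hle : ‖F xδ - F xdag‖ ≤ ‖(F xδ - F xdag) + α • (xδ - xdag)‖ := by
      nlinarith [norm_nonneg ((F xδ - F xdag) + α • (xδ - xdag)), norm_nonneg (F xδ - F xdag)]
    calc ‖F xδ - F xdag‖ ≤ ‖(yδ - F xdag) - α • (xdag - xbar)‖ := by rw [← heq]; exact hle
      _ ≤ ‖yδ - F xdag‖ + ‖α • (xdag - xbar)‖ := norm_sub_le _ _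
      _ ≤ δ + α * M := by
          rw [norm_smul, Real.norm_eq_abs, abs_of_pos hα]
          have : ‖yδ - F xdag‖ ≤ δ := by rw [norm_sub_rev]; exact hnoise
          linarith
      _ = α * M + δ := by ring
  -- now apply stability
  have hK1 : 1 ≤ 2 * max 1 (c * M) := by
    have : (1:ℝ) ≤ max 1 (c * M) := le_max_left _ _
    linarith
  have hmaxnn : (0:ℝ) ≤ max 1 (c * M) := le_trans zero_le_one (le_max_left _ _)
  have hchain : α * M + δ ≤ 2 * max 1 (c * M) * δ := by
    have h1' : α * M ≤ max 1 (c * M) * δ := by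
      calc α * M = (c * M) * δ := by rw [hα_def]; ring
        _ ≤ max 1 (c * M) * δ :=
            mul_le_mul_of_nonneg_right (le_max_right _ _) (le_of_lt hδ)
    have h2' : δ ≤ max 1 (c * M) * δ :=
      le_mul_of_one_le_left (le_of_lt hδ) (le_max_left _ _)
    linarith
  have hFnn : 0 ≤ ‖F xδ - F xdag‖ := norm_nonneg _
  have hstep1 : t ≤ φ (‖F xδ - F xdag‖) := hstab xδ h_in_ball
  have hmono' : MonotoneOn φ (Set.Ici 0) := hφmono.monotoneOn
  have hstep2 : φ (‖F xδ - F xdag‖) ≤ φ (2 * max 1 (c * M) * δ) := by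
    apply hmono' (Set.mem_Ici.mpr hFnn)
      (Set.mem_Ici.mpr (mul_nonneg (by linarith) (le_of_lt hδ)))
    exact le_trans hFbound hchain
  have hstep3 : φ (2 * max 1 (c * M) * δ) ≤ 2 * max 1 (c * M) * φ δ :=
    superhom_aux φ hφ0 hφconc _ δ hK1 (le_of_lt hδ)
  calc t ≤ φ (‖F xδ - F xdag‖) := hstep1
    _ ≤ φ (2 * max 1 (c * M) * δ) := hstep2
    _ ≤ 2 * max 1 (c * M) * φ δ := hstep3
end
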